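/- In the US legislative game: (a) for every k, if c_p(k) = 0 then c_v(k) = c_s(k) = c_r(k) = 0; (b) for every k with c_p(k) ≠ 0, c_p(k) > c_v(k). -/

import Mathlib

/-- The players of the US legislative game: the president, the vice president,
100 senators, and 435 representatives. -/
inductive USPlayer where
  | pres : USPlayer
  | vp : USPlayer
  | sen : Fin 100 → USPlayer
  | rep : Fin 435 → USPlayer
  deriving DecidableEq

/-- Whether a player is a senator. -/
def USPlayer.isSen : USPlayer → Bool
  | .sen _ => true
  | _ => false

/-- Whether a player is a representative. -/
def USPlayer.isRep : USPlayer → Bool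
  | .rep _ => true
  | _ => false

/-- The number of senators in a coalition. -/
def numSen (S : Finset USPlayer) : ℕ := (S.filter (fun p => p.isSen)).card

/-- The number of representatives in a coalition. -/
def numRep (S : Finset USPlayer) : ℕ := (S.filter (fun p => p.isRep)).card

/-- A coalition is winning in the US legislative game iff either the president is in it
together with at least 218 representatives and either at least 51 senators or the vice
president and at least 50 senators; or it contains at least 67 senators and at least
290 representatives (veto override). -/
def usWinning (S : Finset USPlayer) : Prop :=
  (USPlayer.pres ∈ S ∧ 218 ≤ numRep S ∧
    (51 ≤ numSen S ∨ (USPlayer.vp ∈ S ∧ 50 ≤ numSen S))) ∨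
  (67 ≤ numSen S ∧ 290 ≤ numRep S)

/-- The number of coalitions of size `k` in which player `i` is critical in the US
legislative game. -/
noncomputable def usCrit (i : USPlayer) (k : ℕ) : ℕ :=
  Set.ncard {S : Finset USPlayer |
    S.card = k ∧ i ∈ S ∧ usWinning S ∧ ¬ usWinning (S.erase i)}
deriving instance Fintype for USPlayer

lemma numSen_erase_of_not_sen (S : Finset USPlayer) {p : USPlayer} (h : p.isSen = false) :
    numSen (S.erase p) = numSen S := by
  unfold numSen
  rw [Finset.filter_erase, Finset.erase_eq_of_notMem]
  simp [h]

lemma numRep_erase_of_not_rep (S : Finset USPlayer) {p : USPlayer} (h : p.isRep = false) :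
    numRep (S.erase p) = numRep S := by
  unfold numRep
  rw [Finset.filter_erase, Finset.erase_eq_of_notMem]
  simp [h]

lemma numSen_erase_sen (S : Finset USPlayer) (s : Fin 100) (h : USPlayer.sen s ∈ S) :
    numSen (S.erase (.sen s)) = numSen S - 1 := by
  unfold numSen
  rw [Finset.filter_erase, Finset.card_erase_of_mem (Finset.mem_filter.mpr ⟨h, rfl⟩ : _ ∈ S.filter (fun p => p.isSen))]

lemma numRep_erase_rep (S : Finset USPlayer) (r : Fin 435) (h : USPlayer.rep r ∈ S) :
    numRep (S.erase (.rep r)) = numRep S - 1 := by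
  unfold numRep
  rw [Finset.filter_erase, Finset.card_erase_of_mem (Finset.mem_filter.mpr ⟨h, rfl⟩ : _ ∈ S.filter (fun p => p.isRep))]

lemma numSen_insert_of_not_sen (S : Finset USPlayer) {p : USPlayer} (h : p.isSen = false) :
    numSen (insert p S) = numSen S := by
  unfold numSen
  rw [Finset.filter_insert, if_neg (by simp [h])]

lemma numRep_insert_of_not_rep (S : Finset USPlayer) {p : USPlayer} (h : p.isRep = false) :
    numRep (insert p S) = numRep S := by
  unfold numRep
  rw [Finset.filter_insert, if_neg (by simp [h])]

lemma numSen_insert_sen (S : Finset USPlayer) (s : Fin 100) (h : USPlayer.sen s ∉ S) :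
    numSen (insert (.sen s) S) = numSen S + 1 := by
  unfold numSen
  rw [Finset.filter_insert, if_pos (by simp [USPlayer.isSen]),
    Finset.card_insert_of_notMem (by simp [h])]

lemma numRep_insert_sen (S : Finset USPlayer) (s : Fin 100) :
    numRep (insert (.sen s) S) = numRep S :=
  numRep_insert_of_not_rep S rfl

lemma sen_injective : Function.Injective USPlayer.sen := by
  intro a b h; cases h; rfl

lemma exists_sen_not_mem (S : Finset USPlayer) (h : numSen S < 100) :
    ∃ s : Fin 100, USPlayer.sen s ∉ S := by
  by_contra hc
  push_neg at hc
  have hsub : (Finset.univ.image USPlayer.sen : Finset USPlayer) ⊆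
      S.filter (fun p => p.isSen) := by
    intro x hx
    simp only [Finset.mem_image] at hx
    obtain ⟨s, -, rfl⟩ := hx
    exact Finset.mem_filter.mpr ⟨hc s, rfl⟩
  have := Finset.card_le_card hsub
  rw [Finset.card_image_of_injective _ sen_injective, Finset.card_univ] at this
  simp only [Fintype.card_fin] at this
  exact absurd (lt_of_lt_of_le h this) (lt_irrefl _)

/-- If a winning coalition does not satisfy the veto-override condition, then the president
belongs to it and is critical in it. -/
lemma pres_crit_of_not_override (S : Finset USPlayer) (hw : usWinning S)
    (hno : ¬ (67 ≤ numSen S ∧ 290 ≤ numRep S)) :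
    USPlayer.pres ∈ S ∧ usWinning S ∧ ¬ usWinning (S.erase USPlayer.pres) := by
  have hp : USPlayer.pres ∈ S := by
    rcases hw with h | h
    · exact h.1
    · exact absurd h hno
  refine ⟨hp, hw, ?_⟩
  intro hw'
  have h1 := numSen_erase_of_not_sen S (p := .pres) rfl
  have h2 := numRep_erase_of_not_rep S (p := .pres) rfl
  rcases hw' with h | h
  · exact absurd h.1 (by simp [Finset.mem_erase])
  · exact hno ⟨by omega, by omega⟩

/-- Transfer lemma: from any coalition in which some player is critical, one obtains a
coalition of the same size in which the president is critical. -/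
lemma pres_crit_transfer (i : USPlayer) (S : Finset USPlayer)
    (hi : i ∈ S) (hw : usWinning S) (hl : ¬ usWinning (S.erase i)) :
    ∃ T : Finset USPlayer, T.card = S.card ∧ USPlayer.pres ∈ T ∧ usWinning T ∧
      ¬ usWinning (T.erase USPlayer.pres) := by
  by_cases hno : 67 ≤ numSen S ∧ 290 ≤ numRep S
  · -- S satisfies the override; the critical player must be a senator or representative,
    -- and the president is not in S.
    cases i with
    | pres =>
        exfalso
        apply hl
        right
        have h1 := numSen_erase_of_not_sen S (p := .pres) rfl
        have h2 := numRep_erase_of_not_rep S (p := .pres) rfl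
        exact ⟨by omega, by omega⟩
    | vp =>
        exfalso
        apply hl
        right
        have h1 := numSen_erase_of_not_sen S (p := .vp) rfl
        have h2 := numRep_erase_of_not_rep S (p := .vp) rfl
        exact ⟨by omega, by omega⟩
    | sen s =>
        have h1 := numSen_erase_sen S s hi
        have h2 := numRep_erase_of_not_rep S (p := .sen s) rfl
        -- removal loses, so numSen S = 67 and pres ∉ S
        have hsen67 : numSen S = 67 := by
          by_contra hne
          exact hl (Or.inr ⟨by omega, by omega⟩)
        have hpn : USPlayer.pres ∉ S := by
          intro hp
          apply hl
          left
          refine ⟨Finset.mem_erase_of_ne_of_mem (by simp) hp, by omega, Or.inl (by omega)⟩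
        refine ⟨insert .pres (S.erase (.sen s)), ?_, Finset.mem_insert_self _ _, ?_, ?_⟩
        · rw [Finset.card_insert_of_notMem (fun h => hpn (Finset.mem_of_mem_erase h)),
            Finset.card_erase_of_mem hi]
          have : 1 ≤ S.card := Finset.card_pos.mpr ⟨_, hi⟩
          omega
        · left
          have h3 := numSen_insert_of_not_sen (S.erase (.sen s)) (p := .pres) rfl
          have h4 := numRep_insert_of_not_rep (S.erase (.sen s)) (p := .pres) rfl
          exact ⟨Finset.mem_insert_self _ _, by omega, Or.inl (by omega)⟩
        · rw [Finset.erase_insert (fun h => hpn (Finset.mem_of_mem_erase h))]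
          exact hl
    | rep r =>
        have h1 := numRep_erase_rep S r hi
        have h2 := numSen_erase_of_not_sen S (p := .rep r) rfl
        have hrep : numRep S = 290 := by
          by_contra hne
          exact hl (Or.inr ⟨by omega, by omega⟩)
        have hpn : USPlayer.pres ∉ S := by
          intro hp
          apply hl
          left
          refine ⟨Finset.mem_erase_of_ne_of_mem (by simp) hp, by omega, Or.inl (by omega)⟩
        refine ⟨insert .pres (S.erase (.rep r)), ?_, Finset.mem_insert_self _ _, ?_, ?_⟩
        · rw [Finset.card_insert_of_notMem (fun h => hpn (Finset.mem_of_mem_erase h)),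
            Finset.card_erase_of_mem hi]
          have : 1 ≤ S.card := Finset.card_pos.mpr ⟨_, hi⟩
          omega
        · left
          have h3 := numSen_insert_of_not_sen (S.erase (.rep r)) (p := .pres) rfl
          have h4 := numRep_insert_of_not_rep (S.erase (.rep r)) (p := .pres) rfl
          exact ⟨Finset.mem_insert_self _ _, by omega, Or.inl (by omega)⟩
        · rw [Finset.erase_insert (fun h => hpn (Finset.mem_of_mem_erase h))]
          exact hl
  · obtain ⟨hp, hw', hl'⟩ := pres_crit_of_not_override S hw hno
    exact ⟨S, rfl, hp, hw', hl'⟩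

/-- Characterisation of coalitions in which the vice president is critical. -/
lemma vp_crit_char (S : Finset USPlayer) (hv : USPlayer.vp ∈ S) (hw : usWinning S)
    (hl : ¬ usWinning (S.erase USPlayer.vp)) :
    USPlayer.pres ∈ S ∧ numSen S = 50 ∧ 218 ≤ numRep S := by
  have h1 := numSen_erase_of_not_sen S (p := .vp) rfl
  have h2 := numRep_erase_of_not_rep S (p := .vp) rfl
  have hno : ¬ (67 ≤ numSen S ∧ 290 ≤ numRep S) := by
    intro h
    exact hl (Or.inr ⟨by omega, by omega⟩)
  have hp : USPlayer.pres ∈ S := by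
    rcases hw with h | h
    · exact h.1
    · exact absurd h hno
  rcases hw with h | h
  · obtain ⟨-, hr, hs⟩ := h
    have hnot51 : ¬ (51 ≤ numSen S) := by
      intro h51
      exact hl (Or.inl ⟨Finset.mem_erase_of_ne_of_mem (by simp) hp, by omega,
        Or.inl (by omega)⟩)
    rcases hs with h51 | ⟨-, h50⟩
    · exact absurd h51 hnot51
    · exact ⟨hp, by omega, hr⟩
  · exact absurd h hno

/-- Proposition 3 (a), (b) of the paper: (a) if the president's critical number vanishes
at `k`, so do those of the vice president, every senator, and every representative;
(b) wherever the president's critical number is nonzero it strictly exceeds the vice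
president's. -/
theorem us_president_dominates_vp :
    (∀ k : ℕ, usCrit USPlayer.pres k = 0 →
      usCrit USPlayer.vp k = 0 ∧
      (∀ s : Fin 100, usCrit (USPlayer.sen s) k = 0) ∧
      (∀ r : Fin 435, usCrit (USPlayer.rep r) k = 0)) ∧
    (∀ k : ℕ, usCrit USPlayer.pres k ≠ 0 →
      usCrit USPlayer.pres k > usCrit USPlayer.vp k) := by
  classical
  constructor
  · intro k hk
    have hempty : {S : Finset USPlayer | S.card = k ∧ USPlayer.pres ∈ S ∧ usWinning S ∧
        ¬ usWinning (S.erase USPlayer.pres)} = ∅ := by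
      rw [usCrit] at hk
      exact (Set.ncard_eq_zero (Set.toFinite _)).mp hk
    have key : ∀ i : USPlayer, usCrit i k = 0 := by
      intro i
      rw [usCrit, Set.ncard_eq_zero (Set.toFinite _),
        Set.eq_empty_iff_forall_notMem]
      rintro S ⟨hc, hi, hw, hl⟩
      obtain ⟨T, hTc, hTp, hTw, hTl⟩ := pres_crit_transfer i S hi hw hl
      exact Set.eq_empty_iff_forall_notMem.mp hempty T ⟨by omega, hTp, hTw, hTl⟩
    exact ⟨key _, fun s => key _, fun r => key _⟩
  · intro k hk
    set A := {S : Finset USPlayer | S.card = k ∧ USPlayer.pres ∈ S ∧ usWinning S ∧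
      ¬ usWinning (S.erase USPlayer.pres)} with hA
    set B := {S : Finset USPlayer | S.card = k ∧ USPlayer.vp ∈ S ∧ usWinning S ∧
      ¬ usWinning (S.erase USPlayer.vp)} with hB
    have hBA : B ⊆ A := by
      rintro S ⟨hc, hv, hw, hl⟩
      obtain ⟨hp, h50, hr⟩ := vp_crit_char S hv hw hl
      obtain ⟨hp', hw', hl'⟩ := pres_crit_of_not_override S hw (by omega)
      exact ⟨hc, hp', hw', hl'⟩
    have hAne : A.Nonempty := by
      rw [usCrit] at hk
      exact Set.nonempty_of_ncard_ne_zero hk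
    obtain ⟨S, hSA⟩ := hAne
    have hex : ∃ T, T ∈ A ∧ T ∉ B := by
      by_cases hSB : S ∈ B
      · obtain ⟨hc, hv, hw, hl⟩ := hSB
        obtain ⟨hp, h50, hr⟩ := vp_crit_char S hv hw hl
        obtain ⟨s0, hs0⟩ := exists_sen_not_mem S (by omega)
        have hs0e : USPlayer.sen s0 ∉ S.erase USPlayer.vp :=
          fun h => hs0 (Finset.mem_of_mem_erase h)
        refine ⟨insert (.sen s0) (S.erase .vp), ⟨?_, ?_, ?_, ?_⟩, ?_⟩
        · rw [Finset.card_insert_of_notMem hs0e, Finset.card_erase_of_mem hv]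
          have : 1 ≤ S.card := Finset.card_pos.mpr ⟨_, hv⟩
          omega
        · exact Finset.mem_insert_of_mem
            (Finset.mem_erase_of_ne_of_mem (by simp) hp)
        · left
          have h1 := numSen_insert_sen (S.erase .vp) s0 hs0e
          have h2 := numSen_erase_of_not_sen S (p := .vp) rfl
          have h3 := numRep_insert_sen (S.erase .vp) s0
          have h4 := numRep_erase_of_not_rep S (p := .vp) rfl
          exact ⟨Finset.mem_insert_of_mem
            (Finset.mem_erase_of_ne_of_mem (by simp) hp), by omega, Or.inl (by omega)⟩
        · intro hwin
          have h1 := numSen_insert_sen (S.erase .vp) s0 hs0e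
          have h2 := numSen_erase_of_not_sen S (p := .vp) rfl
          have h3 := numRep_insert_sen (S.erase .vp) s0
          have h4 := numRep_erase_of_not_rep S (p := .vp) rfl
          have h5 := numSen_erase_of_not_sen (insert (.sen s0) (S.erase .vp))
            (p := .pres) rfl
          have h6 := numRep_erase_of_not_rep (insert (.sen s0) (S.erase .vp))
            (p := .pres) rfl
          rcases hwin with h | h
          · exact absurd h.1 (by simp [Finset.mem_erase])
          · omega
        · rintro ⟨-, hvmem, -, -⟩
          rcases Finset.mem_insert.mp hvmem with h | h
          · exact absurd h (by simp)
          · exact absurd h (by simp [Finset.mem_erase])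
      · exact ⟨S, hSA, hSB⟩
    obtain ⟨T, hTA, hTB⟩ := hex
    have hss : B ⊂ A := (Set.ssubset_iff_of_subset hBA).mpr ⟨T, hTA, hTB⟩
    have := Set.ncard_lt_ncard hss (Set.toFinite A)
    rw [usCrit, usCrit]
    exact this
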